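/- arXiv:2211.03908 — 3 statements merged into one kernel-verified Lean document; each statement's English description precedes it below -/
import Mathlib

section
/- Let p₁, p₂ ∈ (0,1) and β ≥ 0 be real numbers, and set a = p₁^β, b = p₂^β, a' = (1−p₁)^β, b' = (1−p₂)^β. Consider the 4×4 real matrix A with rows (a, a', 0, 0), (0, 0, b, b'), (b', b, 0, 0), (0, 0, a', a). Then λ* := ((a + b) + √((a − b)² + 4a'b'))/2 is an eigenvalue of A, and every complex root λ of the characteristic polynomial of A satisfies |λ| ≤ λ*; hence the spectral radius of A equals ((p₁^β + p₂^β) + √((p₁^β − p₂^β)² + 4(1−p₁)^β(1−p₂)^β))/2. -/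
open Polynomial

set_option maxHeartbeats 1000000 in
lemma charpoly_eq {R : Type*} [CommRing R] (a b a' b' : R) :
    (!![a, a', 0, 0; 0, 0, b, b'; b', b, 0, 0; 0, 0, a', a] : Matrix (Fin 4) (Fin 4) R).charpoly
      = (X ^ 2 - C (a + b) * X + C (a * b - a' * b')) *
        (X ^ 2 + C (b - a) * X + C (a' * b' - a * b)) := by
  have h : Matrix.charmatrix (!![a, a', 0, 0; 0, 0, b, b'; b', b, 0, 0; 0, 0, a', a] : Matrix (Fin 4) (Fin 4) R)
      = !![X - C a, -C a', 0, 0; 0, X, -C b, -C b'; -C b', -C b, X, 0; 0, 0, -C a', X - C a] := by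
    ext i j
    fin_cases i <;> fin_cases j <;>
      simp [Matrix.charmatrix_apply, Matrix.one_apply]
  rw [Matrix.charpoly, h, Matrix.det_succ_row_zero]
  simp [Fin.sum_univ_succ, Matrix.det_fin_three, Fin.succAbove]
  ring

lemma quad_factor {K : Type*} [CommRing K] (s p r₁ r₂ : K)
    (h1 : r₁ + r₂ = s) (h2 : r₁ * r₂ = p) :
    (X : K[X]) ^ 2 - C s * X + C p = (X - C r₁) * (X - C r₂) := by
  rw [← h1, ← h2, C_add, C_mul]; ring

lemma quad_factor' {K : Type*} [CommRing K] (s p r₁ r₂ : K)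
    (h1 : r₁ + r₂ = -s) (h2 : r₁ * r₂ = p) :
    (X : K[X]) ^ 2 + C s * X + C p = (X - C r₁) * (X - C r₂) := by
  have hs : s = -(r₁ + r₂) := by rw [h1, neg_neg]
  rw [← h2, hs, map_neg, C_add, C_mul]; ring

lemma map_eq (a b a' b' : ℝ) :
    ((!![a, a', 0, 0; 0, 0, b, b'; b', b, 0, 0; 0, 0, a', a] : Matrix (Fin 4) (Fin 4) ℝ).map
      (algebraMap ℝ ℂ))
      = !![(a:ℂ), a', 0, 0; 0, 0, b, b'; b', b, 0, 0; 0, 0, a', a] := by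
  ext i j
  fin_cases i <;> fin_cases j <;> simp [Complex.coe_algebraMap]

/-- The spectral radius of a real square matrix: the supremum of the absolute values of the
complex roots of its characteristic polynomial. -/
noncomputable def specRad {n : Type*} [Fintype n] [DecidableEq n] (A : Matrix n n ℝ) : ℝ :=
  sSup {r : ℝ | ∃ μ ∈ (A.map (algebraMap ℝ ℂ)).charpoly.roots, ‖μ‖ = r}

set_option maxHeartbeats 2000000 in
theorem four_by_four_transition_matrix_spectral_radius
    (p₁ p₂ β : ℝ) (hp₁ : p₁ ∈ Set.Ioo (0:ℝ) 1) (hp₂ : p₂ ∈ Set.Ioo (0:ℝ) 1) (hβ : 0 ≤ β)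
    (a b a' b' : ℝ) (ha : a = p₁ ^ β) (hb : b = p₂ ^ β)
    (ha' : a' = (1 - p₁) ^ β) (hb' : b' = (1 - p₂) ^ β)
    (A : Matrix (Fin 4) (Fin 4) ℝ)
    (hA : A = !![a, a', 0, 0; 0, 0, b, b'; b', b, 0, 0; 0, 0, a', a]) :
    A.charpoly.IsRoot (((a + b) + Real.sqrt ((a - b) ^ 2 + 4 * a' * b')) / 2) ∧
    (∀ μ ∈ (A.map (algebraMap ℝ ℂ)).charpoly.roots,
      ‖μ‖ ≤ ((a + b) + Real.sqrt ((a - b) ^ 2 + 4 * a' * b')) / 2) ∧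
    specRad A = ((p₁ ^ β + p₂ ^ β) +
      Real.sqrt ((p₁ ^ β - p₂ ^ β) ^ 2 + 4 * (1 - p₁) ^ β * (1 - p₂) ^ β)) / 2 := by
  obtain ⟨hp1a, hp1b⟩ := hp₁
  obtain ⟨hp2a, hp2b⟩ := hp₂
  have ha0 : 0 < a := ha ▸ Real.rpow_pos_of_pos hp1a β
  have hb0 : 0 < b := hb ▸ Real.rpow_pos_of_pos hp2a β
  have ha'0 : 0 < a' := ha' ▸ Real.rpow_pos_of_pos (by linarith) β
  have hb'0 : 0 < b' := hb' ▸ Real.rpow_pos_of_pos (by linarith) β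
  rw [← ha, ← hb, ← ha', ← hb']
  subst hA
  set D := Real.sqrt ((a - b) ^ 2 + 4 * a' * b') with hD
  have hD0 : 0 ≤ D := Real.sqrt_nonneg _
  have hD2 : D ^ 2 = (a - b) ^ 2 + 4 * a' * b' := Real.sq_sqrt (by nlinarith)
  have habD : |a - b| ≤ D := by
    rw [← Real.sqrt_sq_eq_abs]; exact Real.sqrt_le_sqrt (by nlinarith)
  set lam := ((a + b) + D) / 2 with hlam
  have hlam0 : 0 ≤ lam := by rw [hlam]; positivity
  have hq1 : lam ^ 2 - (a + b) * lam + (a * b - a' * b') = 0 := by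
    rw [hlam]; linear_combination hD2 / 4
  have hD2C : ((D:ℂ)) ^ 2 = ((a:ℂ) - b) ^ 2 + 4 * a' * b' := by exact_mod_cast hD2
  set z : ℂ := if 0 ≤ (a + b) ^ 2 - 4 * (a' * b') then ((Real.sqrt ((a + b) ^ 2 - 4 * (a' * b')) : ℝ) : ℂ)
      else Complex.I * ((Real.sqrt (4 * (a' * b') - (a + b) ^ 2) : ℝ) : ℂ) with hz
  have hz2 : z ^ 2 = ((a:ℂ) + b) ^ 2 - 4 * ((a':ℂ) * b') := by
    rw [hz]; split_ifs with h
    · rw [← Complex.ofReal_pow, Real.sq_sqrt h]; push_cast; ring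
    · have h' : (0:ℝ) ≤ 4 * (a' * b') - (a + b) ^ 2 := by linarith
      rw [mul_pow, Complex.I_sq, ← Complex.ofReal_pow, Real.sq_sqrt h']; push_cast; ring
  set r₁ : ℂ := ((lam : ℝ) : ℂ) with hr₁
  set r₂ : ℂ := (((a + b - D) / 2 : ℝ) : ℂ) with hr₂
  set r₃ : ℂ := (((a - b) / 2 : ℝ) : ℂ) + z / 2 with hr₃
  set r₄ : ℂ := (((a - b) / 2 : ℝ) : ℂ) - z / 2 with hr₄
  have hcpC : ((!![a, a', 0, 0; 0, 0, b, b'; b', b, 0, 0; 0, 0, a', a] : Matrix (Fin 4) (Fin 4) ℝ).map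
      (algebraMap ℝ ℂ)).charpoly = (X - C r₁) * (X - C r₂) * ((X - C r₃) * (X - C r₄)) := by
    rw [map_eq, charpoly_eq]
    rw [quad_factor ((a:ℂ) + b) ((a:ℂ) * b - (a':ℂ) * b') r₁ r₂
      (by rw [hr₁, hr₂, hlam]; push_cast; ring)
      (by rw [hr₁, hr₂, hlam]; push_cast; linear_combination (-(1:ℂ)/4) * hD2C)]
    rw [quad_factor' ((b:ℂ) - a) ((a':ℂ) * b' - (a:ℂ) * b) r₃ r₄
      (by rw [hr₃, hr₄]; push_cast; ring)
      (by rw [hr₃, hr₄]; push_cast; linear_combination (-(1:ℂ)/4) * hz2)]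
  have hroots : ((!![a, a', 0, 0; 0, 0, b, b'; b', b, 0, 0; 0, 0, a', a] : Matrix (Fin 4) (Fin 4) ℝ).map
      (algebraMap ℝ ℂ)).charpoly.roots = {r₁, r₂, r₃, r₄} := by
    rw [hcpC, roots_mul (by
        exact mul_ne_zero (mul_ne_zero (X_sub_C_ne_zero r₁) (X_sub_C_ne_zero r₂))
          (mul_ne_zero (X_sub_C_ne_zero r₃) (X_sub_C_ne_zero r₄))),
      roots_mul (mul_ne_zero (X_sub_C_ne_zero r₁) (X_sub_C_ne_zero r₂)),
      roots_mul (mul_ne_zero (X_sub_C_ne_zero r₃) (X_sub_C_ne_zero r₄)),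
      roots_X_sub_C, roots_X_sub_C, roots_X_sub_C, roots_X_sub_C]
    rfl
  have hbound : ∀ μ ∈ ((!![a, a', 0, 0; 0, 0, b, b'; b', b, 0, 0; 0, 0, a', a] : Matrix (Fin 4) (Fin 4) ℝ).map (algebraMap ℝ ℂ)).charpoly.roots, ‖μ‖ ≤ lam := by
    intro μ hμ
    rw [hroots] at hμ
    simp only [Multiset.insert_eq_cons, Multiset.mem_cons, Multiset.mem_singleton] at hμ
    rcases hμ with h | h | h | h
    · rw [h, hr₁, Complex.norm_real, Real.norm_eq_abs, abs_of_nonneg hlam0]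
    · rw [h, hr₂, Complex.norm_real, Real.norm_eq_abs]
      exact abs_le.mpr ⟨by rw [hlam]; linarith, by rw [hlam]; linarith⟩
    · subst h
      by_cases hd : 0 ≤ (a + b) ^ 2 - 4 * (a' * b')
      · have hzz : z = ((Real.sqrt ((a + b) ^ 2 - 4 * (a' * b')) : ℝ) : ℂ) := by
          rw [hz, if_pos hd]
        set E := Real.sqrt ((a + b) ^ 2 - 4 * (a' * b')) with hE
        have hE0 : 0 ≤ E := Real.sqrt_nonneg _
        have hEab : E ≤ a + b := by
          rw [hE, show (a+b)^2 - 4*(a'*b') = (a+b)^2 - 4*(a'*b') from rfl]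
          calc Real.sqrt ((a+b)^2 - 4*(a'*b')) ≤ Real.sqrt ((a+b)^2) :=
                Real.sqrt_le_sqrt (by nlinarith)
            _ = a + b := Real.sqrt_sq (by linarith)
        have : r₃ = (((a - b) / 2 + E / 2 : ℝ) : ℂ) := by rw [hr₃, hzz]; push_cast; ring
        rw [this, Complex.norm_real, Real.norm_eq_abs]
        have h1 : |(a - b) / 2 + E / 2| ≤ |a - b| / 2 + E / 2 := by
          calc |(a - b) / 2 + E / 2| ≤ |(a - b) / 2| + |E / 2| := abs_add_le _ _
            _ = |a - b| / 2 + E / 2 := by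
                rw [abs_div, abs_div, abs_of_nonneg hE0]; norm_num
        rw [hlam]; linarith
      · have hd' : (0:ℝ) ≤ 4 * (a' * b') - (a + b) ^ 2 := by push_neg at hd; linarith
        have hzz : z = Complex.I * ((Real.sqrt (4 * (a' * b') - (a + b) ^ 2) : ℝ) : ℂ) := by
          rw [hz, if_neg hd]
        set t := Real.sqrt (4 * (a' * b') - (a + b) ^ 2) with ht
        have ht2 : t ^ 2 = 4 * (a' * b') - (a + b) ^ 2 := Real.sq_sqrt hd'
        have hre : r₃ = Complex.mk ((a - b) / 2) (t / 2) := by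
          rw [hr₃, hzz]
          apply Complex.ext <;> simp [Complex.ofReal_re, Complex.ofReal_im] <;> ring
        have habs2 : ‖r₃‖ ^ 2 = a' * b' - a * b := by
          rw [Complex.sq_norm, hre, Complex.normSq_mk]
          nlinarith [ht2]
        have hlamsq : a' * b' - a * b ≤ lam ^ 2 := by nlinarith [hq1, hlam0, ha0, hb0]
        nlinarith [norm_nonneg r₃, habs2, hlamsq, hlam0]
    · subst h
      by_cases hd : 0 ≤ (a + b) ^ 2 - 4 * (a' * b')
      · have hzz : z = ((Real.sqrt ((a + b) ^ 2 - 4 * (a' * b')) : ℝ) : ℂ) := by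
          rw [hz, if_pos hd]
        set E := Real.sqrt ((a + b) ^ 2 - 4 * (a' * b')) with hE
        have hE0 : 0 ≤ E := Real.sqrt_nonneg _
        have hEab : E ≤ a + b := by
          calc E ≤ Real.sqrt ((a+b)^2) := Real.sqrt_le_sqrt (by nlinarith)
            _ = a + b := Real.sqrt_sq (by linarith)
        have : r₄ = (((a - b) / 2 - E / 2 : ℝ) : ℂ) := by rw [hr₄, hzz]; push_cast; ring
        rw [this, Complex.norm_real, Real.norm_eq_abs]
        have h1 : |(a - b) / 2 - E / 2| ≤ |a - b| / 2 + E / 2 := by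
          calc |(a - b) / 2 - E / 2| ≤ |(a - b) / 2| + |E / 2| := abs_sub _ _
            _ = |a - b| / 2 + E / 2 := by
                rw [abs_div, abs_div, abs_of_nonneg hE0]; norm_num
        rw [hlam]; linarith
      · have hd' : (0:ℝ) ≤ 4 * (a' * b') - (a + b) ^ 2 := by push_neg at hd; linarith
        have hzz : z = Complex.I * ((Real.sqrt (4 * (a' * b') - (a + b) ^ 2) : ℝ) : ℂ) := by
          rw [hz, if_neg hd]
        set t := Real.sqrt (4 * (a' * b') - (a + b) ^ 2) with ht
        have ht2 : t ^ 2 = 4 * (a' * b') - (a + b) ^ 2 := Real.sq_sqrt hd'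
        have hre : r₄ = Complex.mk ((a - b) / 2) (-(t / 2)) := by
          rw [hr₄, hzz]
          apply Complex.ext <;> simp [Complex.ofReal_re, Complex.ofReal_im] <;> ring
        have habs2 : ‖r₄‖ ^ 2 = a' * b' - a * b := by
          rw [Complex.sq_norm, hre, Complex.normSq_mk]
          nlinarith [ht2]
        have hlamsq : a' * b' - a * b ≤ lam ^ 2 := by nlinarith [hq1, hlam0, ha0, hb0]
        nlinarith [norm_nonneg r₄, habs2, hlamsq, hlam0]

  have hmemS : lam ∈ {r : ℝ | ∃ μ ∈ ((!![a, a', 0, 0; 0, 0, b, b'; b', b, 0, 0; 0, 0, a', a] : Matrix (Fin 4) (Fin 4) ℝ).map (algebraMap ℝ ℂ)).charpoly.roots, ‖μ‖ = r} := by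
    refine ⟨r₁, ?_, ?_⟩
    · rw [hroots]; simp
    · rw [hr₁, Complex.norm_real, Real.norm_eq_abs, abs_of_nonneg hlam0]
  have hub : ∀ r ∈ {r : ℝ | ∃ μ ∈ ((!![a, a', 0, 0; 0, 0, b, b'; b', b, 0, 0; 0, 0, a', a] : Matrix (Fin 4) (Fin 4) ℝ).map (algebraMap ℝ ℂ)).charpoly.roots, ‖μ‖ = r}, r ≤ lam := by
    rintro r ⟨μ, hμ, rfl⟩
    exact hbound μ hμ
  refine ⟨?_, hbound, ?_⟩
  · rw [charpoly_eq]
    show eval lam _ = 0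
    simp only [eval_mul, eval_add, eval_sub, eval_pow, eval_X, eval_C]
    linear_combination (lam ^ 2 + (b - a) * lam + (a' * b' - a * b)) * hq1
  · unfold specRad
    exact le_antisymm (csSup_le ⟨lam, hmemS⟩ hub) (le_csSup ⟨lam, hub⟩ hmemS)
end

section
/- Let A be the 4×4 real matrix with rows (1,1,1,1), (1,0,0,0), (1,0,0,0), (1,0,0,0). Then the characteristic polynomial of A equals X⁴ − X³ − 3X² = X²(X² − X − 3), the complex eigenvalues of A are exactly 0, (1 + √13)/2 and (1 − √13)/2, and the spectral radius of A equals (1 + √13)/2. -/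
open Polynomial

theorem golden_graph_transition_matrix_spectrum
    (A : Matrix (Fin 4) (Fin 4) ℝ)
    (hA : A = !![1, 1, 1, 1; 1, 0, 0, 0; 1, 0, 0, 0; 1, 0, 0, 0]) :
    A.charpoly = X ^ 4 - X ^ 3 - C 3 * X ^ 2 ∧
    A.charpoly = X ^ 2 * (X ^ 2 - X - C 3) ∧
    {μ : ℂ | (A.map (algebraMap ℝ ℂ)).charpoly.IsRoot μ} =
      {0, (((1 + Real.sqrt 13) / 2 : ℝ) : ℂ), (((1 - Real.sqrt 13) / 2 : ℝ) : ℂ)} ∧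
    specRad A = (1 + Real.sqrt 13) / 2 := by
  subst hA
  set s := Real.sqrt 13 with hs
  have hs0 : (0:ℝ) ≤ s := Real.sqrt_nonneg 13
  have hs2 : s ^ 2 = 13 := Real.sq_sqrt (by norm_num)
  have h1 : (!![1, 1, 1, 1; 1, 0, 0, 0; 1, 0, 0, 0; 1, 0, 0, 0] : Matrix (Fin 4) (Fin 4) ℝ).charpoly
      = X ^ 4 - X ^ 3 - C 3 * X ^ 2 := by
    have hC : (!![1, 1, 1, 1; 1, 0, 0, 0; 1, 0, 0, 0; 1, 0, 0, 0] : Matrix (Fin 4) (Fin 4) ℝ).charmatrix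
        = !![X - 1, -1, -1, -1; -1, X, 0, 0; -1, 0, X, 0; -1, 0, 0, X] := by
      ext i j
      fin_cases i <;> fin_cases j <;>
        simp [Matrix.charmatrix_apply, Matrix.diagonal_apply, Matrix.vecHead, Matrix.vecTail]
    rw [Matrix.charpoly, hC]
    simp [Matrix.det_succ_row_zero, Fin.sum_univ_succ, Fin.succAbove,
      Fin.castSucc, Fin.castAdd, Fin.castLE, map_ofNat]
    ring
  have h2 : (!![1, 1, 1, 1; 1, 0, 0, 0; 1, 0, 0, 0; 1, 0, 0, 0] : Matrix (Fin 4) (Fin 4) ℝ).charpoly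
      = X ^ 2 * (X ^ 2 - X - C 3) := by rw [h1]; ring
  -- complex charpoly
  have hmap : ((!![1, 1, 1, 1; 1, 0, 0, 0; 1, 0, 0, 0; 1, 0, 0, 0] : Matrix (Fin 4) (Fin 4) ℝ).map
      (algebraMap ℝ ℂ)).charpoly = X ^ 2 * (X ^ 2 - X - C 3) := by
    rw [Matrix.charpoly_map, h2]
    simp [Polynomial.map_mul, Polynomial.map_sub, Polynomial.map_pow]
  have hsc : (s : ℂ) ^ 2 = 13 := by
    norm_cast
  have hroot : ∀ μ : ℂ, ((!![1, 1, 1, 1; 1, 0, 0, 0; 1, 0, 0, 0; 1, 0, 0, 0] : Matrix (Fin 4) (Fin 4) ℝ).map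
      (algebraMap ℝ ℂ)).charpoly.IsRoot μ ↔
      (μ = 0 ∨ μ = (((1 + s) / 2 : ℝ) : ℂ) ∨ μ = (((1 - s) / 2 : ℝ) : ℂ)) := by
    intro μ
    rw [hmap]
    have hfac : μ ^ 2 * (μ ^ 2 - μ - 3)
        = μ ^ 2 * ((μ - (((1 + s) / 2 : ℝ) : ℂ)) * (μ - (((1 - s) / 2 : ℝ) : ℂ))) := by
      push_cast
      linear_combination (μ ^ 2 / 4) * hsc
    constructor
    · intro h
      have h' : μ ^ 2 * (μ ^ 2 - μ - 3) = 0 := by simpa [IsRoot] using h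
      rw [hfac] at h'
      rcases mul_eq_zero.mp h' with h'' | h''
      · exact Or.inl (pow_eq_zero_iff (by norm_num) |>.mp h'')
      · rcases mul_eq_zero.mp h'' with h3 | h3
        · exact Or.inr (Or.inl (by linear_combination h3))
        · exact Or.inr (Or.inr (by linear_combination h3))
    · intro h
      have : μ ^ 2 * (μ ^ 2 - μ - 3) = 0 := by
        rw [hfac]
        rcases h with h | h | h <;> subst h <;> ring
      simpa [IsRoot] using this
  refine ⟨h1, h2, ?_, ?_⟩
  · ext μ
    simpa [Set.mem_setOf_eq] using hroot μ
  · -- spectral radius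
    have hpne : ((!![1, 1, 1, 1; 1, 0, 0, 0; 1, 0, 0, 0; 1, 0, 0, 0] : Matrix (Fin 4) (Fin 4) ℝ).map
        (algebraMap ℝ ℂ)).charpoly ≠ 0 := Matrix.charpoly_monic _ |>.ne_zero
    have hmem : ∀ μ : ℂ, μ ∈ ((!![1, 1, 1, 1; 1, 0, 0, 0; 1, 0, 0, 0; 1, 0, 0, 0] : Matrix (Fin 4) (Fin 4) ℝ).map
        (algebraMap ℝ ℂ)).charpoly.roots ↔
        (μ = 0 ∨ μ = (((1 + s) / 2 : ℝ) : ℂ) ∨ μ = (((1 - s) / 2 : ℝ) : ℂ)) := by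
      intro μ
      rw [mem_roots hpne]
      exact hroot μ
    apply IsGreatest.csSup_eq
    constructor
    · exact ⟨(((1 + s) / 2 : ℝ) : ℂ), (hmem _).mpr (Or.inr (Or.inl rfl)), by
        rw [Complex.norm_real, Real.norm_eq_abs, abs_of_nonneg (by positivity)]⟩
    · rintro r ⟨μ, hμ, rfl⟩
      rcases (hmem μ).mp hμ with h | h | h <;> subst h <;>
        simp only [map_zero, norm_zero, Complex.norm_real, Real.norm_eq_abs]
      · positivity
      · rw [abs_of_nonneg (by positivity)]
      · rcases abs_cases ((1 - s) / 2) with ⟨h, _⟩ | ⟨h, _⟩ <;> rw [h] <;> linarith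
end

section
/- For every integer k ≥ 2, the polynomial P_k satisfies: P_k((1−k)/2) = 0 and the derivative P_k'((1−k)/2) > 0; and P_k((k−1)/2) = 0 and P_k'((k−1)/2) < 0. (Thus r₀ = (1−k)/2 and r₁ = (k−1)/2 are simple roots of P_k, and (r₀,0), (r₁,0) are crossing points of the piecewise smooth vector field Z_k = ((±1, P_k'(x)) for ±y ≥ 0) with switching manifold {y = 0}.) -/
/-- The polynomial `P_k(x) = -(x + (k-1)/2)(x - (k-1)/2) ∏_{i=1}^{k-1} (x - (i - k/2))²`. -/
noncomputable def Pk (k : ℕ) (x : ℝ) : ℝ :=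
  -((x + ((k : ℝ) - 1) / 2) * (x - ((k : ℝ) - 1) / 2)) *
    ∏ i ∈ Finset.Icc 1 (k - 1), (x - ((i : ℝ) - (k : ℝ) / 2)) ^ 2

/-- The product part of `Pk`. -/
noncomputable def Qk (k : ℕ) (x : ℝ) : ℝ :=
  ∏ i ∈ Finset.Icc 1 (k - 1), (x - ((i : ℝ) - (k : ℝ) / 2)) ^ 2

lemma Qk_diff (k : ℕ) : Differentiable ℝ (Qk k) := by
  apply Differentiable.fun_finsetProd
  intro i _
  exact (differentiable_id.sub_const _).pow 2

lemma Qk_pos (k : ℕ) (x : ℝ) (hx : ∀ i ∈ Finset.Icc 1 (k - 1), x ≠ (i : ℝ) - (k : ℝ) / 2) :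
    0 < Qk k x := by
  apply Finset.prod_pos
  intro i hi
  exact sq_pos_of_ne_zero (sub_ne_zero.mpr (hx i hi))

lemma Pk_hasDerivAt (k : ℕ) (x : ℝ) :
    HasDerivAt (Pk k)
      (-(1 * (x - ((k : ℝ) - 1) / 2) + (x + ((k : ℝ) - 1) / 2) * 1) * Qk k x +
        -((x + ((k : ℝ) - 1) / 2) * (x - ((k : ℝ) - 1) / 2)) * deriv (Qk k) x) x := by
  have h1 : HasDerivAt (fun x : ℝ => x + ((k : ℝ) - 1) / 2) 1 x :=
    (hasDerivAt_id x).add_const _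
  have h2 : HasDerivAt (fun x : ℝ => x - ((k : ℝ) - 1) / 2) 1 x :=
    (hasDerivAt_id x).sub_const _
  have hQ : HasDerivAt (Qk k) (deriv (Qk k) x) x := (Qk_diff k x).hasDerivAt
  exact ((h1.mul h2).neg).mul hQ

/-- `r₀ = (1-k)/2` and `r₁ = (k-1)/2` are simple roots of `P_k`, with `P_k' > 0` at `r₀`
and `P_k' < 0` at `r₁`; hence `(r₀,0)`, `(r₁,0)` are crossing points of `Z_k`. -/
theorem Pk_simple_roots_at_endpoints (k : ℕ) (hk : 2 ≤ k) :
    Pk k ((1 - (k : ℝ)) / 2) = 0 ∧ 0 < deriv (Pk k) ((1 - (k : ℝ)) / 2) ∧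
    Pk k (((k : ℝ) - 1) / 2) = 0 ∧ deriv (Pk k) (((k : ℝ) - 1) / 2) < 0 := by
  have hk1 : (1 : ℝ) ≤ (k : ℝ) := by exact_mod_cast Nat.one_le_of_lt hk
  set r0 : ℝ := (1 - (k : ℝ)) / 2 with hr0
  set r1 : ℝ := ((k : ℝ) - 1) / 2 with hr1
  have hz0 : r0 + ((k : ℝ) - 1) / 2 = 0 := by rw [hr0]; ring
  have hz1 : r1 - ((k : ℝ) - 1) / 2 = 0 := by rw [hr1]; ring
  have hP0 : Pk k r0 = 0 := by
    unfold Pk; rw [show r0 + ((k : ℝ) - 1) / 2 = 0 from hz0]; ring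
  have hP1 : Pk k r1 = 0 := by
    unfold Pk; rw [show r1 - ((k : ℝ) - 1) / 2 = 0 from hz1]; ring
  have hQ0 : 0 < Qk k r0 := by
    apply Qk_pos
    intro i hi
    have hi1 : 1 ≤ i := (Finset.mem_Icc.mp hi).1
    have : (1 : ℝ) ≤ (i : ℝ) := by exact_mod_cast hi1
    intro h
    have : (1 : ℝ) - (2 : ℝ) * (i : ℝ) = 0 := by
      rw [hr0] at h; linarith [h]
    linarith
  have hQ1 : 0 < Qk k r1 := by
    apply Qk_pos
    intro i hi
    have hi2 : i ≤ k - 1 := (Finset.mem_Icc.mp hi).2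
    have : (i : ℝ) ≤ (k : ℝ) - 1 := by
      have : (i : ℝ) ≤ ((k - 1 : ℕ) : ℝ) := by exact_mod_cast hi2
      rwa [Nat.cast_sub (Nat.one_le_of_lt hk), Nat.cast_one] at this
    intro h
    have : (2 : ℝ) * (k : ℝ) - 1 - 2 * (i : ℝ) = 0 := by
      rw [hr1] at h; linarith [h]
    linarith
  have hd0 : deriv (Pk k) r0 = ((k : ℝ) - 1) * Qk k r0 := by
    rw [(Pk_hasDerivAt k r0).deriv, hz0]
    rw [hr0]; ring
  have hd1 : deriv (Pk k) r1 = (1 - (k : ℝ)) * Qk k r1 := by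
    rw [(Pk_hasDerivAt k r1).deriv, hz1]
    rw [hr1]; ring
  have hk2 : (2 : ℝ) ≤ (k : ℝ) := by exact_mod_cast hk
  refine ⟨hP0, ?_, hP1, ?_⟩
  · rw [hd0]; exact mul_pos (by linarith) hQ0
  · rw [hd1]; exact mul_neg_of_neg_of_pos (by linarith) hQ1
end
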